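/- Let O(G₁) = {g ∈ GL₆(ℤ) : gᵀ·G₁·g = G₁}, and let Γ₁ = {g ∈ O(G₁) : all entries of (g − I₆)·G₁⁻¹ are integers} (the subgroup acting trivially on the discriminant group G₁⁻¹ℤ⁶/ℤ⁶). Let σ₁ ∈ GL₆(ℤ) be the block-diagonal matrix diag(I₄, [[0,−1],[−1,0]]) (the reflection along the (−4)-vector e₅ + e₆). Then Γ₁ is a normal subgroup of O(G₁) of index 2, σ₁ ∈ O(G₁) but σ₁ ∉ Γ₁, and O(G₁) is the union of Γ₁ and Γ₁·σ₁; that is, the quotient O(G₁)/Γ₁ is generated by the class of σ₁. -/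

import Mathlib

open Matrix

/-- The Gram matrix of the even lattice `U ⊥ U ⊥ ⟨−2⟩ ⊥ ⟨−2⟩`. -/
def G1 : Matrix (Fin 6) (Fin 6) ℤ :=
  !![0, 1, 0, 0, 0, 0;
     1, 0, 0, 0, 0, 0;
     0, 0, 0, 1, 0, 0;
     0, 0, 1, 0, 0, 0;
     0, 0, 0, 0, -2, 0;
     0, 0, 0, 0, 0, -2]

/-- `O(G₁) = {g ∈ GL₆(ℤ) : gᵀ G₁ g = G₁}`. -/
def OG1 : Subgroup (Matrix (Fin 6) (Fin 6) ℤ)ˣ where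
  carrier := {g | (g : Matrix (Fin 6) (Fin 6) ℤ)ᵀ * G1 * g = G1}
  one_mem' := by simp
  mul_mem' := by
    intro a b ha hb
    show (↑(a * b) : Matrix (Fin 6) (Fin 6) ℤ)ᵀ * G1 * (↑(a * b) : Matrix (Fin 6) (Fin 6) ℤ) = G1
    rw [Units.val_mul, Matrix.transpose_mul]
    calc (↑b : Matrix (Fin 6) (Fin 6) ℤ)ᵀ * (↑a : Matrix (Fin 6) (Fin 6) ℤ)ᵀ * G1 * ((↑a : Matrix (Fin 6) (Fin 6) ℤ) * (↑b : Matrix (Fin 6) (Fin 6) ℤ))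
        = (↑b : Matrix (Fin 6) (Fin 6) ℤ)ᵀ * ((↑a : Matrix (Fin 6) (Fin 6) ℤ)ᵀ * G1 * (↑a : Matrix (Fin 6) (Fin 6) ℤ)) * (↑b : Matrix (Fin 6) (Fin 6) ℤ) := by noncomm_ring
      _ = (↑b : Matrix (Fin 6) (Fin 6) ℤ)ᵀ * G1 * (↑b : Matrix (Fin 6) (Fin 6) ℤ) := by rw [ha]
      _ = G1 := hb
  inv_mem' := by
    intro a ha
    show ((a⁻¹).val)ᵀ * G1 * (a⁻¹).val = G1
    have h1 : a.val * (a⁻¹).val = 1 := by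
      rw [← Units.val_mul, mul_inv_cancel, Units.val_one]
    have key : ((a⁻¹).val)ᵀ * ((a.val)ᵀ * G1 * a.val) * (a⁻¹).val = G1 := by
      calc ((a⁻¹).val)ᵀ * ((a.val)ᵀ * G1 * a.val) * (a⁻¹).val
          = (a.val * (a⁻¹).val)ᵀ * G1 * (a.val * (a⁻¹).val) := by
            rw [Matrix.transpose_mul]; noncomm_ring
        _ = G1 := by rw [h1]; simp
    rw [ha] at key
    exact key

/-- `g` acts trivially on the discriminant group: all entries of `(g − I₆)·G₁⁻¹`
are integers (computed in `ℚ`). -/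
def DiscTrivial (g : (Matrix (Fin 6) (Fin 6) ℤ)ˣ) : Prop :=
  ∀ i j : Fin 6, ∃ n : ℤ,
    ((((g : Matrix (Fin 6) (Fin 6) ℤ)).map (Int.cast : ℤ → ℚ) - 1) *
      (G1.map (Int.cast : ℤ → ℚ))⁻¹) i j = n

/-- The reflection `σ₁` along the `(−4)`-vector `e₅ + e₆`:
`diag(I₄, [[0,−1],[−1,0]])`. -/
def sigma1 : Matrix (Fin 6) (Fin 6) ℤ :=
  !![1, 0, 0, 0, 0, 0;
     0, 1, 0, 0, 0, 0;
     0, 0, 1, 0, 0, 0;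
     0, 0, 0, 1, 0, 0;
     0, 0, 0, 0, 0, -1;
     0, 0, 0, 0, -1, 0]



namespace Gamma1Aux

noncomputable section

def Qinv : Matrix (Fin 6) (Fin 6) ℚ :=
  !![0, 1, 0, 0, 0, 0;
     1, 0, 0, 0, 0, 0;
     0, 0, 0, 1, 0, 0;
     0, 0, 1, 0, 0, 0;
     0, 0, 0, 0, -(1/2), 0;
     0, 0, 0, 0, 0, -(1/2)]

@[simp] lemma G1e_0_0 : G1 0 0 = 0 := rfl
@[simp] lemma G1e_0_1 : G1 0 1 = 1 := rfl
@[simp] lemma G1e_0_2 : G1 0 2 = 0 := rfl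
@[simp] lemma G1e_0_3 : G1 0 3 = 0 := rfl
@[simp] lemma G1e_0_4 : G1 0 4 = 0 := rfl
@[simp] lemma G1e_0_5 : G1 0 5 = 0 := rfl
@[simp] lemma G1e_1_0 : G1 1 0 = 1 := rfl
@[simp] lemma G1e_1_1 : G1 1 1 = 0 := rfl
@[simp] lemma G1e_1_2 : G1 1 2 = 0 := rfl
@[simp] lemma G1e_1_3 : G1 1 3 = 0 := rfl
@[simp] lemma G1e_1_4 : G1 1 4 = 0 := rfl
@[simp] lemma G1e_1_5 : G1 1 5 = 0 := rfl
@[simp] lemma G1e_2_0 : G1 2 0 = 0 := rfl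
@[simp] lemma G1e_2_1 : G1 2 1 = 0 := rfl
@[simp] lemma G1e_2_2 : G1 2 2 = 0 := rfl
@[simp] lemma G1e_2_3 : G1 2 3 = 1 := rfl
@[simp] lemma G1e_2_4 : G1 2 4 = 0 := rfl
@[simp] lemma G1e_2_5 : G1 2 5 = 0 := rfl
@[simp] lemma G1e_3_0 : G1 3 0 = 0 := rfl
@[simp] lemma G1e_3_1 : G1 3 1 = 0 := rfl
@[simp] lemma G1e_3_2 : G1 3 2 = 1 := rfl
@[simp] lemma G1e_3_3 : G1 3 3 = 0 := rfl
@[simp] lemma G1e_3_4 : G1 3 4 = 0 := rfl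
@[simp] lemma G1e_3_5 : G1 3 5 = 0 := rfl
@[simp] lemma G1e_4_0 : G1 4 0 = 0 := rfl
@[simp] lemma G1e_4_1 : G1 4 1 = 0 := rfl
@[simp] lemma G1e_4_2 : G1 4 2 = 0 := rfl
@[simp] lemma G1e_4_3 : G1 4 3 = 0 := rfl
@[simp] lemma G1e_4_4 : G1 4 4 = (-2) := rfl
@[simp] lemma G1e_4_5 : G1 4 5 = 0 := rfl
@[simp] lemma G1e_5_0 : G1 5 0 = 0 := rfl
@[simp] lemma G1e_5_1 : G1 5 1 = 0 := rfl
@[simp] lemma G1e_5_2 : G1 5 2 = 0 := rfl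
@[simp] lemma G1e_5_3 : G1 5 3 = 0 := rfl
@[simp] lemma G1e_5_4 : G1 5 4 = 0 := rfl
@[simp] lemma G1e_5_5 : G1 5 5 = (-2) := rfl
@[simp] lemma Qe_0_0 : Qinv 0 0 = 0 := rfl
@[simp] lemma Qe_0_1 : Qinv 0 1 = 1 := rfl
@[simp] lemma Qe_0_2 : Qinv 0 2 = 0 := rfl
@[simp] lemma Qe_0_3 : Qinv 0 3 = 0 := rfl
@[simp] lemma Qe_0_4 : Qinv 0 4 = 0 := rfl
@[simp] lemma Qe_0_5 : Qinv 0 5 = 0 := rfl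
@[simp] lemma Qe_1_0 : Qinv 1 0 = 1 := rfl
@[simp] lemma Qe_1_1 : Qinv 1 1 = 0 := rfl
@[simp] lemma Qe_1_2 : Qinv 1 2 = 0 := rfl
@[simp] lemma Qe_1_3 : Qinv 1 3 = 0 := rfl
@[simp] lemma Qe_1_4 : Qinv 1 4 = 0 := rfl
@[simp] lemma Qe_1_5 : Qinv 1 5 = 0 := rfl
@[simp] lemma Qe_2_0 : Qinv 2 0 = 0 := rfl
@[simp] lemma Qe_2_1 : Qinv 2 1 = 0 := rfl
@[simp] lemma Qe_2_2 : Qinv 2 2 = 0 := rfl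
@[simp] lemma Qe_2_3 : Qinv 2 3 = 1 := rfl
@[simp] lemma Qe_2_4 : Qinv 2 4 = 0 := rfl
@[simp] lemma Qe_2_5 : Qinv 2 5 = 0 := rfl
@[simp] lemma Qe_3_0 : Qinv 3 0 = 0 := rfl
@[simp] lemma Qe_3_1 : Qinv 3 1 = 0 := rfl
@[simp] lemma Qe_3_2 : Qinv 3 2 = 1 := rfl
@[simp] lemma Qe_3_3 : Qinv 3 3 = 0 := rfl
@[simp] lemma Qe_3_4 : Qinv 3 4 = 0 := rfl
@[simp] lemma Qe_3_5 : Qinv 3 5 = 0 := rfl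
@[simp] lemma Qe_4_0 : Qinv 4 0 = 0 := rfl
@[simp] lemma Qe_4_1 : Qinv 4 1 = 0 := rfl
@[simp] lemma Qe_4_2 : Qinv 4 2 = 0 := rfl
@[simp] lemma Qe_4_3 : Qinv 4 3 = 0 := rfl
@[simp] lemma Qe_4_4 : Qinv 4 4 = -(1/2) := rfl
@[simp] lemma Qe_4_5 : Qinv 4 5 = 0 := rfl
@[simp] lemma Qe_5_0 : Qinv 5 0 = 0 := rfl
@[simp] lemma Qe_5_1 : Qinv 5 1 = 0 := rfl
@[simp] lemma Qe_5_2 : Qinv 5 2 = 0 := rfl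
@[simp] lemma Qe_5_3 : Qinv 5 3 = 0 := rfl
@[simp] lemma Qe_5_4 : Qinv 5 4 = 0 := rfl
@[simp] lemma Qe_5_5 : Qinv 5 5 = -(1/2) := rfl

lemma mem_OG1 {g : (Matrix (Fin 6) (Fin 6) ℤ)ˣ} :
    g ∈ OG1 ↔ (g.val)ᵀ * G1 * g.val = G1 := Iff.rfl

lemma hGinv : (G1.map (Int.cast : ℤ → ℚ))⁻¹ = Qinv := by
  apply Matrix.inv_eq_right_inv
  ext i j
  fin_cases i <;> fin_cases j <;>
    simp [Matrix.mul_apply, Fin.sum_univ_six, Matrix.map_apply, Matrix.one_apply] <;> norm_num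






lemma cast2_eq_of_dvd {x y : ℤ} (h : 2 ∣ x - y) : (x : ZMod 2) = (y : ZMod 2) := by
  have h0 := (ZMod.intCast_zmod_eq_zero_iff_dvd (x - y) 2).mpr h
  push_cast at h0
  exact sub_eq_zero.mp h0

set_option maxHeartbeats 1000000 in
lemma struct {g : (Matrix (Fin 6) (Fin 6) ℤ)ˣ} (hg : g ∈ OG1) :
    (2 ∣ g.val 0 4) ∧ (2 ∣ g.val 1 4) ∧ (2 ∣ g.val 2 4) ∧ (2 ∣ g.val 3 4) ∧
    (2 ∣ g.val 0 5) ∧ (2 ∣ g.val 1 5) ∧ (2 ∣ g.val 2 5) ∧ (2 ∣ g.val 3 5) ∧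
    ((g.val 5 4 : ZMod 2) = (g.val 4 4 : ZMod 2) + 1) ∧
    ((g.val 4 5 : ZMod 2) = (g.val 4 4 : ZMod 2) + 1) ∧
    ((g.val 5 5 : ZMod 2) = (g.val 4 4 : ZMod 2)) := by
  have hg' : (g.val)ᵀ * G1 * g.val = G1 := hg
  set A := g.val with hA
  set B := (g⁻¹).val with hB
  have hAB : A * B = 1 := Units.mul_inv g
  have h1 : Bᵀ * Aᵀ = 1 := by rw [← Matrix.transpose_mul, hAB, Matrix.transpose_one]
  have hGA : G1 * A = Bᵀ * G1 := by
    calc G1 * A = (Bᵀ * Aᵀ) * (G1 * A) := by rw [h1, one_mul]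
      _ = Bᵀ * (Aᵀ * G1 * A) := by noncomm_ring
      _ = Bᵀ * G1 := by rw [hg']
  have d04 : 2 ∣ A 0 4 := by
    have := congrFun (congrFun hGA 1) 4
    simp [Matrix.mul_apply, Fin.sum_univ_six] at this; omega
  have d14 : 2 ∣ A 1 4 := by
    have := congrFun (congrFun hGA 0) 4
    simp [Matrix.mul_apply, Fin.sum_univ_six] at this; omega
  have d24 : 2 ∣ A 2 4 := by
    have := congrFun (congrFun hGA 3) 4
    simp [Matrix.mul_apply, Fin.sum_univ_six] at this; omega
  have d34 : 2 ∣ A 3 4 := by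
    have := congrFun (congrFun hGA 2) 4
    simp [Matrix.mul_apply, Fin.sum_univ_six] at this; omega
  have d05 : 2 ∣ A 0 5 := by
    have := congrFun (congrFun hGA 1) 5
    simp [Matrix.mul_apply, Fin.sum_univ_six] at this; omega
  have d15 : 2 ∣ A 1 5 := by
    have := congrFun (congrFun hGA 0) 5
    simp [Matrix.mul_apply, Fin.sum_univ_six] at this; omega
  have d25 : 2 ∣ A 2 5 := by
    have := congrFun (congrFun hGA 3) 5
    simp [Matrix.mul_apply, Fin.sum_univ_six] at this; omega
  have d35 : 2 ∣ A 3 5 := by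
    have := congrFun (congrFun hGA 2) 5
    simp [Matrix.mul_apply, Fin.sum_univ_six] at this; omega
  refine ⟨d04, d14, d24, d34, d05, d15, d25, d35, ?_⟩
  obtain ⟨a0, ha0⟩ := d04; obtain ⟨a1, ha1⟩ := d14
  obtain ⟨a2, ha2⟩ := d24; obtain ⟨a3, ha3⟩ := d34
  obtain ⟨b0, hb0⟩ := d05; obtain ⟨b1, hb1⟩ := d15
  obtain ⟨b2, hb2⟩ := d25; obtain ⟨b3, hb3⟩ := d35
  have q44 : 2*(A 0 4 * A 1 4) + 2*(A 2 4 * A 3 4) - 2*(A 4 4)^2 - 2*(A 5 4)^2 = -2 := by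
    have := congrFun (congrFun hg' 4) 4
    simp [Matrix.mul_apply, Fin.sum_univ_six] at this; linarith [this]
  have q55 : 2*(A 0 5 * A 1 5) + 2*(A 2 5 * A 3 5) - 2*(A 4 5)^2 - 2*(A 5 5)^2 = -2 := by
    have := congrFun (congrFun hg' 5) 5
    simp [Matrix.mul_apply, Fin.sum_univ_six] at this; linarith [this]
  have q45 : A 0 4 * A 1 5 + A 1 4 * A 0 5 + A 2 4 * A 3 5 + A 3 4 * A 2 5
      - 2*(A 4 4 * A 4 5) - 2*(A 5 4 * A 5 5) = 0 := by
    have := congrFun (congrFun hg' 4) 5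
    simp [Matrix.mul_apply, Fin.sum_univ_six] at this; linarith [this]
  have hx : A 4 4 ^ 2 + A 5 4 ^ 2 = 1 + 4*(a0*a1 + a2*a3) := by
    have h2 : (2:ℤ) * (A 4 4 ^ 2 + A 5 4 ^ 2) = 2 * (1 + 4*(a0*a1 + a2*a3)) := by
      rw [ha0, ha1, ha2, ha3] at q44; linear_combination -q44
    exact mul_left_cancel₀ (by norm_num) h2
  have hy : A 4 5 ^ 2 + A 5 5 ^ 2 = 1 + 4*(b0*b1 + b2*b3) := by
    have h2 : (2:ℤ) * (A 4 5 ^ 2 + A 5 5 ^ 2) = 2 * (1 + 4*(b0*b1 + b2*b3)) := by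
      rw [hb0, hb1, hb2, hb3] at q55; linear_combination -q55
    exact mul_left_cancel₀ (by norm_num) h2
  have hz : A 4 4 * A 4 5 + A 5 4 * A 5 5 = 2*(a0*b1 + a1*b0 + a2*b3 + a3*b2) := by
    have h2 : (2:ℤ) * (A 4 4 * A 4 5 + A 5 4 * A 5 5)
        = 2 * (2*(a0*b1 + a1*b0 + a2*b3 + a3*b2)) := by
      rw [ha0, ha1, ha2, ha3, hb0, hb1, hb2, hb3] at q45; linear_combination -q45
    exact mul_left_cancel₀ (by norm_num) h2


  have key : ∀ x y x' y' : ZMod 2, x + y = 1 → x' + y' = 1 → x*x' + y*y' = 0 →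
      (y = x + 1 ∧ x' = x + 1 ∧ y' = x) := by decide
  obtain ⟨c, hc⟩ := Int.even_mul_succ_self (A 4 4 - 1)
  obtain ⟨d, hd⟩ := Int.even_mul_succ_self (A 5 4 - 1)
  obtain ⟨c', hc'⟩ := Int.even_mul_succ_self (A 4 5 - 1)
  obtain ⟨d', hd'⟩ := Int.even_mul_succ_self (A 5 5 - 1)
  have l1 : A 4 4 + A 5 4 - 1 = 2*(2*(a0*a1+a2*a3) - c - d) := by
    linear_combination hx - hc - hd
  have l2 : A 4 5 + A 5 5 - 1 = 2*(2*(b0*b1+b2*b3) - c' - d') := by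
    linear_combination hy - hc' - hd'
  have c1 : (A 4 4 : ZMod 2) + (A 5 4 : ZMod 2) = 1 := by
    have h0 := cast2_eq_of_dvd (x := A 4 4 + A 5 4) (y := 1) ⟨2*(a0*a1+a2*a3) - c - d, by linarith [l1]⟩
    push_cast at h0; exact h0
  have c2 : (A 4 5 : ZMod 2) + (A 5 5 : ZMod 2) = 1 := by
    have h0 := cast2_eq_of_dvd (x := A 4 5 + A 5 5) (y := 1) ⟨2*(b0*b1+b2*b3) - c' - d', by linarith [l2]⟩
    push_cast at h0; exact h0
  have c3 : (A 4 4 : ZMod 2) * (A 4 5 : ZMod 2) + (A 5 4 : ZMod 2) * (A 5 5 : ZMod 2) = 0 := by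
    have h0 := cast2_eq_of_dvd (x := A 4 4 * A 4 5 + A 5 4 * A 5 5) (y := 0) ⟨a0*b1 + a1*b0 + a2*b3 + a3*b2, by linarith [hz]⟩
    push_cast at h0; exact h0
  exact key _ _ _ _ c1 c2 c3



lemma dvd_of_cast2_eq {x y : ℤ} (h : (x : ZMod 2) = (y : ZMod 2)) : 2 ∣ x - y := by
  have h0 : ((x - y : ℤ) : ZMod 2) = 0 := by push_cast; rw [h]; ring
  exact (ZMod.intCast_zmod_eq_zero_iff_dvd (x - y) 2).mp h0

lemma fm0 : (⟨0, by norm_num⟩ : Fin 6) = 0 := rfl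
lemma fm1 : (⟨1, by norm_num⟩ : Fin 6) = 1 := rfl
lemma fm2 : (⟨2, by norm_num⟩ : Fin 6) = 2 := rfl
lemma fm3 : (⟨3, by norm_num⟩ : Fin 6) = 3 := rfl
lemma fm4 : (⟨4, by norm_num⟩ : Fin 6) = 4 := rfl
lemma fm5 : (⟨5, by norm_num⟩ : Fin 6) = 5 := rfl

lemma disc_ent4 (A : Matrix (Fin 6) (Fin 6) ℤ) (i : Fin 6) :
    ((A.map (Int.cast : ℤ → ℚ) - 1) * (G1.map (Int.cast : ℤ → ℚ))⁻¹) i 4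
      = ((A i 4 : ℚ) - if i = 4 then 1 else 0) * (-(1/2)) := by
  rw [hGinv]
  simp [Matrix.mul_apply, Fin.sum_univ_six, Matrix.sub_apply, Matrix.map_apply,
    Matrix.one_apply]
  all_goals (split_ifs <;> ring)

lemma disc_ent5 (A : Matrix (Fin 6) (Fin 6) ℤ) (i : Fin 6) :
    ((A.map (Int.cast : ℤ → ℚ) - 1) * (G1.map (Int.cast : ℤ → ℚ))⁻¹) i 5
      = ((A i 5 : ℚ) - if i = 5 then 1 else 0) * (-(1/2)) := by
  rw [hGinv]
  simp [Matrix.mul_apply, Fin.sum_univ_six, Matrix.sub_apply, Matrix.map_apply,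
    Matrix.one_apply]
  all_goals (split_ifs <;> ring)

lemma dt_iff {g : (Matrix (Fin 6) (Fin 6) ℤ)ˣ} (hg : g ∈ OG1) :
    DiscTrivial g ↔ (g.val 4 4 : ZMod 2) = 1 := by
  constructor
  · intro hD
    obtain ⟨n, hn⟩ := hD 4 4
    rw [disc_ent4] at hn
    simp at hn
    have hint : g.val 4 4 = 1 - 2 * n := by
      have : (g.val 4 4 : ℚ) = 1 - 2 * n := by linarith [hn]
      exact_mod_cast this
    have hdvd : 2 ∣ g.val 4 4 - 1 := ⟨-n, by omega⟩
    have := cast2_eq_of_dvd hdvd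
    simpa using this
  · intro ha
    obtain ⟨d04, d14, d24, d34, d05, d15, d25, d35, h54, h45, h55⟩ := struct hg
    have e44 : 2 ∣ g.val 4 4 - 1 := dvd_of_cast2_eq (by rw [ha]; norm_num)
    have e54 : 2 ∣ g.val 5 4 - 0 := dvd_of_cast2_eq (by rw [h54, ha]; decide)
    have e45 : 2 ∣ g.val 4 5 - 0 := dvd_of_cast2_eq (by rw [h45, ha]; decide)
    have e55 : 2 ∣ g.val 5 5 - 1 := dvd_of_cast2_eq (by rw [h55, ha]; norm_num)
    intro i j
    have col4 : ∀ i : Fin 6, 2 ∣ g.val i 4 - (if i = 4 then 1 else 0) := by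
      intro i; fin_cases i <;> simp <;> omega
    have col5 : ∀ i : Fin 6, 2 ∣ g.val i 5 - (if i = 5 then 1 else 0) := by
      intro i; fin_cases i <;> simp <;> omega
    obtain ⟨m4, hm4⟩ := col4 i
    obtain ⟨m5, hm5⟩ := col5 i
    fin_cases j <;> simp only [fm0, fm1, fm2, fm3, fm4, fm5]
    · refine ⟨g.val i 1 - (if i = 1 then 1 else 0), ?_⟩
      rw [hGinv]
      simp [Matrix.mul_apply, Fin.sum_univ_six, Matrix.sub_apply, Matrix.map_apply,
        Matrix.one_apply]
      all_goals (split_ifs <;> push_cast <;> ring)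
    · refine ⟨g.val i 0 - (if i = 0 then 1 else 0), ?_⟩
      rw [hGinv]
      simp [Matrix.mul_apply, Fin.sum_univ_six, Matrix.sub_apply, Matrix.map_apply,
        Matrix.one_apply]
      all_goals (split_ifs <;> push_cast <;> ring)
    · refine ⟨g.val i 3 - (if i = 3 then 1 else 0), ?_⟩
      rw [hGinv]
      simp [Matrix.mul_apply, Fin.sum_univ_six, Matrix.sub_apply, Matrix.map_apply,
        Matrix.one_apply]
      all_goals (split_ifs <;> push_cast <;> ring)
    · refine ⟨g.val i 2 - (if i = 2 then 1 else 0), ?_⟩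
      rw [hGinv]
      simp [Matrix.mul_apply, Fin.sum_univ_six, Matrix.sub_apply, Matrix.map_apply,
        Matrix.one_apply]
      all_goals (split_ifs <;> push_cast <;> ring)
    · refine ⟨-m4, ?_⟩
      rw [disc_ent4 g.val i]
      have : ((g.val i 4 : ℚ) - if i = 4 then 1 else 0) = 2 * m4 := by
        have := hm4; split_ifs at this ⊢ <;> push_cast <;> exact_mod_cast this
      rw [this]; push_cast; ring
    · refine ⟨-m5, ?_⟩
      rw [disc_ent5 g.val i]
      have : ((g.val i 5 : ℚ) - if i = 5 then 1 else 0) = 2 * m5 := by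
        have := hm5; split_ifs at this ⊢ <;> push_cast <;> exact_mod_cast this
      rw [this]; push_cast; ring

lemma par_mul {g h : (Matrix (Fin 6) (Fin 6) ℤ)ˣ} (hg : g ∈ OG1) (hh : h ∈ OG1) :
    ((g * h).val 4 4 : ZMod 2) = (g.val 4 4 : ZMod 2) + (h.val 4 4 : ZMod 2) + 1 := by
  obtain ⟨_, _, _, _, _, _, _, _, _, g45, _⟩ := struct hg
  obtain ⟨h04, h14, h24, h34, _, _, _, _, h54, _, _⟩ := struct hh
  have key : (g * h).val 4 4 =
      g.val 4 0 * h.val 0 4 + g.val 4 1 * h.val 1 4 + g.val 4 2 * h.val 2 4 +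
      g.val 4 3 * h.val 3 4 + g.val 4 4 * h.val 4 4 + g.val 4 5 * h.val 5 4 := by
    rw [Units.val_mul, Matrix.mul_apply, Fin.sum_univ_six]
  have z0 : (h.val 0 4 : ZMod 2) = 0 := (ZMod.intCast_zmod_eq_zero_iff_dvd _ 2).mpr h04
  have z1 : (h.val 1 4 : ZMod 2) = 0 := (ZMod.intCast_zmod_eq_zero_iff_dvd _ 2).mpr h14
  have z2 : (h.val 2 4 : ZMod 2) = 0 := (ZMod.intCast_zmod_eq_zero_iff_dvd _ 2).mpr h24
  have z3 : (h.val 3 4 : ZMod 2) = 0 := (ZMod.intCast_zmod_eq_zero_iff_dvd _ 2).mpr h34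
  have := congrArg (fun z : ℤ => (z : ZMod 2)) key
  push_cast at this
  rw [z0, z1, z2, z3, g45, h54] at this
  simp only [mul_zero, add_zero, zero_add, zero_mul] at this
  rw [Units.val_mul, this]
  have h2 : ∀ a b : ZMod 2, a * b + (a + 1) * (b + 1) = a + b + 1 := by decide
  exact h2 _ _

noncomputable def phi : OG1 →* Multiplicative (ZMod 2) where
  toFun g := Multiplicative.ofAdd ((g.val.val 4 4 : ZMod 2) + 1)
  map_one' := by
    simp only [OneMemClass.coe_one, Units.val_one, Matrix.one_apply_eq, Int.cast_one]
    decide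
  map_mul' := by
    intro x y
    have hxy : ((x * y).val : (Matrix (Fin 6) (Fin 6) ℤ)ˣ) = x.val * y.val := rfl
    show Multiplicative.ofAdd _ = Multiplicative.ofAdd _ * Multiplicative.ofAdd _
    rw [← ofAdd_add]
    apply congrArg
    rw [hxy, par_mul x.2 y.2]
    ring

def Gamma : Subgroup (Matrix (Fin 6) (Fin 6) ℤ)ˣ where
  carrier := {g | g ∈ OG1 ∧ DiscTrivial g}
  one_mem' := by
    refine ⟨one_mem _, (dt_iff (one_mem _)).mpr ?_⟩
    rw [Units.val_one, Matrix.one_apply_eq]; norm_num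
  mul_mem' := by
    rintro a b ⟨haO, haD⟩ ⟨hbO, hbD⟩
    refine ⟨mul_mem haO hbO, (dt_iff (mul_mem haO hbO)).mpr ?_⟩
    rw [par_mul haO hbO, (dt_iff haO).mp haD, (dt_iff hbO).mp hbD]
    decide
  inv_mem' := by
    rintro a ⟨haO, haD⟩
    have hinvO : a⁻¹ ∈ OG1 := inv_mem haO
    refine ⟨hinvO, (dt_iff hinvO).mpr ?_⟩
    have h := par_mul haO hinvO
    rw [mul_inv_cancel, Units.val_one, Matrix.one_apply_eq, (dt_iff haO).mp haD] at h
    have h1 : ((1 : ℤ) : ZMod 2) = 1 := by norm_num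
    rw [h1] at h
    have : ∀ t : ZMod 2, 1 = 1 + t + 1 → t = 1 := by decide
    exact this _ h

lemma sigma1_sq : sigma1 * sigma1 = 1 := by decide

def su : (Matrix (Fin 6) (Fin 6) ℤ)ˣ := ⟨sigma1, sigma1, sigma1_sq, sigma1_sq⟩

lemma su_mem : su ∈ OG1 := by
  show sigma1ᵀ * G1 * sigma1 = G1
  decide

lemma su_par : (su.val 4 4 : ZMod 2) = 0 := by
  have : su.val 4 4 = 0 := rfl
  rw [this]; norm_num

lemma phi_eq_one_iff (x : OG1) : phi x = 1 ↔ ((x : (Matrix (Fin 6) (Fin 6) ℤ)ˣ).val 4 4 : ZMod 2) = 1 := by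
  have e : ∀ t : ZMod 2, (Multiplicative.ofAdd (t + 1) = 1 ↔ t = 1) := by decide
  exact e _

lemma ker_eq : Gamma.subgroupOf OG1 = phi.ker := by
  ext x
  rw [Subgroup.mem_subgroupOf, MonoidHom.mem_ker]
  change ((x : (Matrix (Fin 6) (Fin 6) ℤ)ˣ) ∈ OG1 ∧ DiscTrivial x) ↔ _
  rw [phi_eq_one_iff]
  constructor
  · rintro ⟨_, hD⟩; exact (dt_iff x.2).mp hD
  · intro h; exact ⟨x.2, (dt_iff x.2).mpr h⟩

lemma phi_surj : Function.Surjective phi := by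
  intro y
  have hy : y = 1 ∨ y = Multiplicative.ofAdd 1 := by revert y; decide
  rcases hy with rfl | rfl
  · exact ⟨1, map_one phi⟩
  · refine ⟨⟨su, su_mem⟩, ?_⟩
    show Multiplicative.ofAdd ((su.val 4 4 : ZMod 2) + 1) = Multiplicative.ofAdd 1
    rw [su_par, zero_add]

end

end Gamma1Aux

theorem Gamma1_index_two_generated_by_sigma1 :
    ∃ (H : Subgroup (Matrix (Fin 6) (Fin 6) ℤ)ˣ) (s : (Matrix (Fin 6) (Fin 6) ℤ)ˣ),
      (s : Matrix (Fin 6) (Fin 6) ℤ) = sigma1 ∧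
      (∀ g : (Matrix (Fin 6) (Fin 6) ℤ)ˣ, g ∈ H ↔ g ∈ OG1 ∧ DiscTrivial g) ∧
      H ≤ OG1 ∧
      (H.subgroupOf OG1).Normal ∧
      (H.subgroupOf OG1).index = 2 ∧
      s ∈ OG1 ∧ s ∉ H ∧
      (∀ g ∈ OG1, g ∈ H ∨ ∃ h ∈ H, g = h * s) := by
  open Gamma1Aux in
  refine ⟨Gamma, su, rfl, fun g => Iff.rfl, fun g hg => hg.1, ?_, ?_, su_mem, ?_, ?_⟩
  · rw [Gamma1Aux.ker_eq]; exact MonoidHom.normal_ker Gamma1Aux.phi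
  · rw [Gamma1Aux.ker_eq, Subgroup.index_ker,
      MonoidHom.range_eq_top_of_surjective _ Gamma1Aux.phi_surj, Subgroup.card_top,
      Nat.card_eq_fintype_card, Fintype.card_multiplicative, ZMod.card]
  · rintro ⟨hO, hD⟩
    have h1 := (Gamma1Aux.dt_iff hO).mp hD
    rw [Gamma1Aux.su_par] at h1
    exact (by decide : (0 : ZMod 2) ≠ 1) h1
  · intro g hgO
    by_cases hc : ((g.val 4 4 : ℤ) : ZMod 2) = 1
    · left; exact ⟨hgO, (Gamma1Aux.dt_iff hgO).mpr hc⟩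
    · right
      have h0 : ((g.val 4 4 : ℤ) : ZMod 2) = 0 := by
        revert hc; generalize ((g.val 4 4 : ℤ) : ZMod 2) = t; revert t; decide
      have hsinv : (Gamma1Aux.su)⁻¹ ∈ OG1 := inv_mem Gamma1Aux.su_mem
      have hsp : (((Gamma1Aux.su)⁻¹.val 4 4 : ℤ) : ZMod 2) = 0 := by
        have : (Gamma1Aux.su)⁻¹.val 4 4 = 0 := rfl
        rw [this]; norm_num
      have hpar := Gamma1Aux.par_mul hgO hsinv
      rw [h0, hsp] at hpar
      refine ⟨g * (Gamma1Aux.su)⁻¹,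
        ⟨mul_mem hgO hsinv, (Gamma1Aux.dt_iff (mul_mem hgO hsinv)).mpr (by rw [hpar]; decide)⟩, ?_⟩
      rw [inv_mul_cancel_right]
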